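/- Let A be an r × k matrix over a field F whose columns are linearly independent (so r ≥ k), and let R be a k × r matrix whose entries are independent uniformly random elements of a subset S ⊆ F. Then the probability that the k × k matrix R·A is singular is at most k/|S|. In particular, if |S| ≥ 2k, the product RA is nonsingular with probability at least 1/2. -/

import Mathlib

/-- Decidability of entrywise membership for matrices (instance search no longer finds it). -/
instance Matrix.decidablePredForallMem {F : Type*} [DecidableEq F] {k r : ℕ} (S : Finset F) :
    DecidablePred (fun R : Matrix (Fin k) (Fin r) F => ∀ i j, R i j ∈ S) :=
  fun R => @Fintype.decidableForallFintype _ _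
    (fun i => @Fintype.decidableForallFintype _ _ (fun j => Finset.decidableMem (R i j) S) _) _

lemma hyperplane_count {F : Type*} [Field F] [Fintype F] [DecidableEq F] {r : ℕ} (S : Finset F)
    (w : Fin r → F) (hw : w ≠ 0) :
    ((Fintype.piFinset (fun _ : Fin r => S)).filter (fun x => ∑ t, x t * w t = 0)).card
      ≤ S.card ^ (r - 1) := by
  obtain ⟨t0, ht0⟩ := Function.ne_iff.mp hw
  have ht0' : w t0 ≠ 0 := ht0
  have key : ((Fintype.piFinset (fun _ : Fin r => S)).filter (fun x => ∑ t, x t * w t = 0)).card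
      ≤ (Fintype.piFinset (fun _ : {t : Fin r // t ≠ t0} => S)).card := by
    apply Finset.card_le_card_of_injOn (fun x (t : {t : Fin r // t ≠ t0}) => x t.1)
    · intro x hx
      simp only [Finset.mem_coe, Finset.mem_filter, Fintype.mem_piFinset] at hx ⊢
      exact fun t => hx.1 t.1
    · intro x hx y hy hxy
      simp only [Finset.mem_coe, Finset.mem_filter, Fintype.mem_piFinset] at hx hy
      have hne : ∀ t, t ≠ t0 → x t = y t := fun t ht => congrFun hxy ⟨t, ht⟩
      have hsum : ∑ t ∈ Finset.univ.erase t0, x t * w t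
          = ∑ t ∈ Finset.univ.erase t0, y t * w t :=
        Finset.sum_congr rfl fun t ht => by rw [hne t (Finset.mem_erase.mp ht).1]
      have hx0 : x t0 * w t0 + ∑ t ∈ Finset.univ.erase t0, x t * w t = 0 := by
        rw [Finset.add_sum_erase Finset.univ (fun t => x t * w t) (Finset.mem_univ t0)]; exact hx.2
      have hy0 : y t0 * w t0 + ∑ t ∈ Finset.univ.erase t0, y t * w t = 0 := by
        rw [Finset.add_sum_erase Finset.univ (fun t => y t * w t) (Finset.mem_univ t0)]; exact hy.2
      have hxy0 : x t0 = y t0 := by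
        have h := hx0.trans hy0.symm
        rw [hsum] at h
        exact mul_right_cancel₀ ht0' (add_right_cancel h)
      funext t
      by_cases h : t = t0
      · subst h; exact hxy0
      · exact hne t h
  rw [Fintype.card_piFinset, Finset.prod_const, Finset.card_univ] at key
  have hcard : Fintype.card {t : Fin r // t ≠ t0} = r - 1 := by
    simp [Fintype.card_subtype_compl, Fintype.card_subtype_eq]
  rwa [hcard] at key

lemma exists_normal_vector {F : Type*} [Field F] {k : ℕ} (U : Submodule F (Fin k → F))
    (hU : U ≠ ⊤) : ∃ v : Fin k → F, v ≠ 0 ∧ ∀ u ∈ U, ∑ l, u l * v l = 0 := by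
  obtain ⟨f, hf, hker⟩ :=
    U.exists_dual_map_eq_bot_of_lt_top (lt_top_iff_ne_top.mpr hU) inferInstance
  refine ⟨fun l => f (fun j => if l = j then 1 else 0), ?_, ?_⟩
  · intro h0
    apply hf
    refine LinearMap.ext fun x => ?_
    rw [LinearMap.pi_apply_eq_sum_univ f x]
    have : ∀ l, f (fun j => if l = j then 1 else 0) = 0 := fun l => congrFun h0 l
    simp [this]
  · intro u hu
    have hz : f u = 0 := by
      have : f u ∈ U.map f := Submodule.mem_map_of_mem hu
      rwa [hker, Submodule.mem_bot] at this
    rw [LinearMap.pi_apply_eq_sum_univ f u] at hz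
    simpa [mul_comm] using hz

lemma span_ne_top {F : Type*} [Field F] {k : ℕ} {ι : Type*} [Fintype ι]
    (hcard : Fintype.card ι < k) (b : ι → (Fin k → F)) :
    Submodule.span F (Set.range b) ≠ ⊤ := by
  intro h
  have h1 := finrank_range_le_card (R := F) b
  rw [Set.finrank, h] at h1
  rw [finrank_top, Module.finrank_pi, Fintype.card_fin] at h1
  omega

lemma row_mem_span_of_det_eq_zero {F : Type*} [Field F] {k : ℕ}
    {M : Matrix (Fin k) (Fin k) F} (h : M.det = 0) :
    ∃ i : Fin k, M i ∈ Submodule.span F (Set.range fun j : {j : Fin k // j ≠ i} => M j.1) := by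
  obtain ⟨c, hc, hcM⟩ := Matrix.exists_vecMul_eq_zero_iff.mpr h
  obtain ⟨i, hi⟩ := Function.ne_iff.mp hc
  have hi' : c i ≠ 0 := hi
  refine ⟨i, ?_⟩
  have hrow : M i = ∑ j : {j : Fin k // j ≠ i}, (-((c i)⁻¹) * c j.1) • M j.1 := by
    funext l
    have h0 : ∑ j, c j * M j l = 0 := congrFun hcM l
    rw [← Finset.add_sum_erase Finset.univ (fun j => c j * M j l) (Finset.mem_univ i)] at h0
    have hsub : ∑ j ∈ Finset.univ.erase i, c j * M j l
        = ∑ j : {j : Fin k // j ≠ i}, c j.1 * M j.1 l :=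
      Finset.sum_subtype (Finset.univ.erase i) (fun j => by simp) (fun j => c j * M j l)
    rw [hsub] at h0
    have key : M i l = (c i)⁻¹ * (-(∑ j : {j : Fin k // j ≠ i}, c j.1 * M j.1 l)) := by
      rw [← eq_neg_of_add_eq_zero_left h0, inv_mul_cancel_left₀ hi']
    rw [Finset.sum_apply]
    rw [key, mul_neg, ← neg_mul, Finset.mul_sum]
    exact Finset.sum_congr rfl fun j _ => by simp [smul_eq_mul]; ring
  rw [hrow]
  exact Submodule.sum_mem _ fun j _ =>
    Submodule.smul_mem _ _ (Submodule.subset_span ⟨j, rfl⟩)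

lemma row_sum_eq {F : Type*} [Field F] {k r : ℕ} (A : Matrix (Fin r) (Fin k) F)
    (x : Fin r → F) (v : Fin k → F) :
    ∑ l, (Matrix.vecMul x A) l * v l = ∑ t, x t * (A.mulVec v) t := by
  simp only [Matrix.vecMul, Matrix.mulVec, dotProduct, Finset.sum_mul, Finset.mul_sum]
  rw [Finset.sum_comm]
  exact Finset.sum_congr rfl fun t _ => Finset.sum_congr rfl fun l _ => by ring

lemma card_Bi {F : Type*} [Field F] [Fintype F] [DecidableEq F] {k r : ℕ} (S : Finset F)
    (A : Matrix (Fin r) (Fin k) F)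
    (hAinj : ∀ v : Fin k → F, v ≠ 0 → A.mulVec v ≠ 0) (i : Fin k) :
    (@Finset.filter _
        (fun R => (R * A) i ∈
          Submodule.span F (Set.range fun j : {j : Fin k // j ≠ i} => (R * A) j.1))
        (Classical.decPred _)
        (Finset.univ.filter (fun R : Matrix (Fin k) (Fin r) F => ∀ i j, R i j ∈ S))).card
      ≤ (S.card ^ r) ^ (k - 1) * S.card ^ (r - 1) := by
  classical
  set Bi := (@Finset.filter _
        (fun R => (R * A) i ∈
          Submodule.span F (Set.range fun j : {j : Fin k // j ≠ i} => (R * A) j.1))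
        (Classical.decPred _)
        (Finset.univ.filter (fun R : Matrix (Fin k) (Fin r) F => ∀ i j, R i j ∈ S))) with hBi
  set T := Fintype.piFinset (fun _ : {j : Fin k // j ≠ i} =>
      Fintype.piFinset (fun _ : Fin r => S)) with hT
  have hk1 : 0 < k := i.pos
  have hcsub : Fintype.card {j : Fin k // j ≠ i} = k - 1 := by
    simp [Fintype.card_subtype_compl, Fintype.card_subtype_eq]
  have hmaps : ∀ R ∈ Bi, (fun (j : {j : Fin k // j ≠ i}) => R j.1) ∈ T := by
    intro R hR
    rw [hBi, Finset.mem_filter, Finset.mem_filter] at hR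
    simp only [hT, Fintype.mem_piFinset]
    exact fun j t => hR.1.2 j.1 t
  rw [Finset.card_eq_sum_card_fiberwise hmaps]
  have hfiber : ∀ g ∈ T,
      (Bi.filter (fun R => (fun (j : {j : Fin k // j ≠ i}) => R j.1) = g)).card
        ≤ S.card ^ (r - 1) := by
    intro g hg
    have hklt : Fintype.card {j : Fin k // j ≠ i} < k := by
      rw [hcsub]; omega
    obtain ⟨v, hv0, hv⟩ := exists_normal_vector
      (Submodule.span F (Set.range fun j : {j : Fin k // j ≠ i} => Matrix.vecMul (g j) A))
      (span_ne_top hklt _)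
    have hw0 : A.mulVec v ≠ 0 := hAinj v hv0
    have hinto : ∀ R ∈ Bi.filter (fun R => (fun (j : {j : Fin k // j ≠ i}) => R j.1) = g),
        R i ∈ (Fintype.piFinset (fun _ : Fin r => S)).filter
          (fun x => ∑ t, x t * (A.mulVec v) t = 0) := by
      intro R hR
      rw [Finset.mem_filter] at hR
      obtain ⟨hR1, hRg⟩ := hR
      rw [hBi, Finset.mem_filter, Finset.mem_filter] at hR1
      obtain ⟨⟨_, hRS⟩, hRspan⟩ := hR1
      rw [Finset.mem_filter]
      constructor
      · rw [Fintype.mem_piFinset]; exact fun t => hRS i t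
      · -- (R*A) i ∈ span of rows j ≠ i, which equal vecMul (g j) A
        have hrows : (fun j : {j : Fin k // j ≠ i} => (R * A) j.1)
            = (fun j : {j : Fin k // j ≠ i} => Matrix.vecMul (g j) A) := by
          funext j
          have : R j.1 = g j := congrFun hRg j
          funext l
          rw [← this]
          simp [Matrix.mul_apply, Matrix.vecMul, dotProduct]
        rw [hrows] at hRspan
        have := hv _ hRspan
        have hRiA : (R * A) i = Matrix.vecMul (R i) A := by
          funext l; simp [Matrix.mul_apply, Matrix.vecMul, dotProduct]
        rw [hRiA] at this
        rw [← row_sum_eq A (R i) v]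
        exact this
    have hinj : Set.InjOn (fun R : Matrix (Fin k) (Fin r) F => R i)
        ↑(Bi.filter (fun R => (fun (j : {j : Fin k // j ≠ i}) => R j.1) = g)) := by
      intro R hR R' hR' hRR'
      simp only [Finset.mem_coe, Finset.mem_filter] at hR hR'
      funext j t
      by_cases h : j = i
      · subst h; exact congrFun hRR' t
      · have h1 : R j = g ⟨j, h⟩ := congrFun hR.2 ⟨j, h⟩
        have h2 : R' j = g ⟨j, h⟩ := congrFun hR'.2 ⟨j, h⟩
        rw [h1, h2]
    calc (Bi.filter (fun R => (fun (j : {j : Fin k // j ≠ i}) => R j.1) = g)).card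
        ≤ ((Fintype.piFinset (fun _ : Fin r => S)).filter
            (fun x => ∑ t, x t * (A.mulVec v) t = 0)).card :=
          Finset.card_le_card_of_injOn _ hinto hinj
      _ ≤ S.card ^ (r - 1) := hyperplane_count S _ hw0
  calc ∑ g ∈ T, (Bi.filter (fun R => (fun (j : {j : Fin k // j ≠ i}) => R j.1) = g)).card
      ≤ ∑ _g ∈ T, S.card ^ (r - 1) := Finset.sum_le_sum hfiber
    _ = T.card * S.card ^ (r - 1) := by rw [Finset.sum_const, smul_eq_mul]
    _ = (S.card ^ r) ^ (k - 1) * S.card ^ (r - 1) := by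
        rw [hT, Fintype.card_piFinset]
        simp only [Fintype.card_piFinset, Finset.prod_const, Finset.card_univ]
        rw [hcsub]
        simp

theorem random_truncation_nonsingular
    (F : Type*) [Field F] [Fintype F] [DecidableEq F] (k r : ℕ)
    (A : Matrix (Fin r) (Fin k) F)
    (hA : LinearIndependent F (fun j : Fin k => fun i : Fin r => A i j))
    (S : Finset F) (hS : S.Nonempty) :
    ((((Finset.univ.filter (fun R : Matrix (Fin k) (Fin r) F => ∀ i j, R i j ∈ S)).filter
          (fun R => (R * A).det = 0)).card : ℝ)
        ≤ (k : ℝ) / (S.card : ℝ) *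
          ((Finset.univ.filter (fun R : Matrix (Fin k) (Fin r) F => ∀ i j, R i j ∈ S)).card : ℝ)) ∧
      (2 * k ≤ S.card →
        (((Finset.univ.filter (fun R : Matrix (Fin k) (Fin r) F => ∀ i j, R i j ∈ S)).card : ℝ)
          ≤ 2 * (((Finset.univ.filter
              (fun R : Matrix (Fin k) (Fin r) F => ∀ i j, R i j ∈ S)).filter
                (fun R => (R * A).det ≠ 0)).card : ℝ))) := by
  classical
  set Ω := Finset.univ.filter (fun R : Matrix (Fin k) (Fin r) F => ∀ i j, R i j ∈ S) with hΩ
  have hS0 : 0 < S.card := Finset.card_pos.mpr hS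
  have hΩcard : Ω.card = (S.card ^ r) ^ k := by
    have heq : Ω = (Fintype.piFinset fun _ : Fin k => Fintype.piFinset fun _ : Fin r => S) := by
      ext R
      simp only [hΩ, Finset.mem_filter, Finset.mem_univ, true_and]
      constructor
      · intro h
        exact Fintype.mem_piFinset.mpr fun i => Fintype.mem_piFinset.mpr fun j => h i j
      · intro h i j
        exact Fintype.mem_piFinset.mp (Fintype.mem_piFinset.mp h i) j
    rw [heq]
    refine (Fintype.card_piFinset _).trans ?_
    simp
  have main : ((Ω.filter (fun R => (R * A).det = 0)).card : ℝ)
      ≤ (k : ℝ) / (S.card : ℝ) * (Ω.card : ℝ) := by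
    rcases Nat.eq_zero_or_pos k with hk | hk
    · subst hk
      have hempty : Ω.filter (fun R => (R * A).det = 0) = ∅ := by
        ext R; simp [Matrix.det_isEmpty]
      simp [hempty]
    · -- k ≥ 1
      have hkr : k ≤ r := by
        have h1 := hA.fintype_card_le_finrank
        rwa [Fintype.card_fin, Module.finrank_fin_fun] at h1
      have hr1 : 1 ≤ r := le_trans hk hkr
      have hAinj : ∀ v : Fin k → F, v ≠ 0 → A.mulVec v ≠ 0 := by
        intro v hv hAv
        apply hv
        have hsum : ∑ j, v j • (fun i : Fin r => A i j) = 0 := by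
          funext i
          have h0 : A.mulVec v i = 0 := congrFun hAv i
          simp only [Matrix.mulVec, dotProduct] at h0
          simp only [Finset.sum_apply, Pi.smul_apply, smul_eq_mul, Pi.zero_apply]
          rw [← h0]
          exact Finset.sum_congr rfl fun j _ => mul_comm _ _
        have := Fintype.linearIndependent_iff.mp hA v hsum
        funext j; exact this j
      set B : Fin k → Finset (Matrix (Fin k) (Fin r) F) := fun i =>
        (@Finset.filter _
          (fun R => (R * A) i ∈
            Submodule.span F (Set.range fun j : {j : Fin k // j ≠ i} => (R * A) j.1))
          (Classical.decPred _) Ω) with hB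
      have hsub : Ω.filter (fun R => (R * A).det = 0) ⊆ Finset.univ.biUnion B := by
        intro R hR
        rw [Finset.mem_filter] at hR
        obtain ⟨i, hi⟩ := row_mem_span_of_det_eq_zero hR.2
        rw [Finset.mem_biUnion]
        exact ⟨i, Finset.mem_univ i, Finset.mem_filter.mpr ⟨hR.1, hi⟩⟩
      have hBadcard : (Ω.filter (fun R => (R * A).det = 0)).card
          ≤ k * ((S.card ^ r) ^ (k - 1) * S.card ^ (r - 1)) := by
        calc (Ω.filter (fun R => (R * A).det = 0)).card
            ≤ (Finset.univ.biUnion B).card := Finset.card_le_card hsub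
          _ ≤ ∑ i, (B i).card := Finset.card_biUnion_le
          _ ≤ ∑ _i : Fin k, (S.card ^ r) ^ (k - 1) * S.card ^ (r - 1) :=
              Finset.sum_le_sum fun i _ => card_Bi S A hAinj i
          _ = k * ((S.card ^ r) ^ (k - 1) * S.card ^ (r - 1)) := by
              rw [Finset.sum_const, Finset.card_univ, Fintype.card_fin, smul_eq_mul]
      have hnat : (Ω.filter (fun R => (R * A).det = 0)).card * S.card
          ≤ k * (S.card ^ r) ^ k := by
        calc (Ω.filter (fun R => (R * A).det = 0)).card * S.card
            ≤ k * ((S.card ^ r) ^ (k - 1) * S.card ^ (r - 1)) * S.card :=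
              Nat.mul_le_mul_right _ hBadcard
          _ = k * (S.card ^ r) ^ k := by
              rw [mul_assoc, mul_assoc, ← pow_succ, Nat.sub_add_cancel hr1, ← pow_succ,
                Nat.sub_add_cancel hk]
      rw [hΩcard, div_mul_eq_mul_div, le_div_iff₀ (by exact_mod_cast hS0)]
      exact_mod_cast hnat
  refine ⟨main, fun h2 => ?_⟩
  have hGB : (Ω.filter (fun R => (R * A).det = 0)).card
      + (Ω.filter (fun R => (R * A).det ≠ 0)).card = Ω.card := by
    have := Finset.card_filter_add_card_filter_not
      (s := Ω) (p := fun R => (R * A).det = 0)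
    simpa using this
  have hGBR : ((Ω.filter (fun R => (R * A).det = 0)).card : ℝ)
      + ((Ω.filter (fun R => (R * A).det ≠ 0)).card : ℝ) = (Ω.card : ℝ) := by
    exact_mod_cast hGB
  have hΩpos : (0:ℝ) ≤ (Ω.card : ℝ) := by positivity
  have hks : (k : ℝ) / (S.card : ℝ) ≤ 1 / 2 := by
    rw [div_le_div_iff₀ (by exact_mod_cast hS0) (by norm_num)]
    have : (2 * k : ℝ) ≤ (S.card : ℝ) := by exact_mod_cast h2
    linarith
  have hhalf : (k : ℝ) / (S.card : ℝ) * (Ω.card : ℝ) ≤ 1 / 2 * (Ω.card : ℝ) :=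
    mul_le_mul_of_nonneg_right hks hΩpos
  linarith
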